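/- Let L be a complete discrete valuation field of characteristic p > 0 with residue field l, and let a in L with v_L(a) < 0. The element a is 'best' (i.e., no a' with v_L(a') > v_L(a) satisfies a = a' + b^p - b for some b in L) if and only if either p does not divide v_L(a), or p divides v_L(a) but the residue class of a / pi_L^{v_L(a)} does not lie in l^p. -/

import Mathlib

section helpers

lemma wt_le_add {s : WithTop ℤ} {c d : ℤ} (h : (c : WithTop ℤ) ≤ s) :
    ((c + d : ℤ) : WithTop ℤ) ≤ s + (d : WithTop ℤ) := by
  cases s with
  | top => simp
  | coe s => rw [← WithTop.coe_add]; exact_mod_cast add_le_add_left (by exact_mod_cast h) d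

lemma wt_lt_add {s : WithTop ℤ} {c d : ℤ} (h : (c : WithTop ℤ) < s) :
    ((c + d : ℤ) : WithTop ℤ) < s + (d : WithTop ℤ) := by
  cases s with
  | top => simp [lt_top_iff_ne_top]
  | coe s => rw [← WithTop.coe_add]; exact_mod_cast add_lt_add_left (by exact_mod_cast h) d

lemma val_zpow {L : Type} [Field L] (vL : AddValuation L (WithTop ℤ)) {π : L}
    (hπ : vL π = 1) (k : ℤ) : vL (π ^ k) = (k : WithTop ℤ) := by
  have hnat : ∀ n : ℕ, vL (π ^ n) = ((n : ℤ) : WithTop ℤ) := by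
    intro n
    rw [AddValuation.map_pow, hπ]
    have : ((1 : ℤ) : WithTop ℤ) = (1 : WithTop ℤ) := rfl
    rw [← this, ← WithTop.coe_nsmul]
    norm_num
  rcases le_or_gt 0 k with hk | hk
  · lift k to ℕ using hk
    rw [zpow_natCast]; exact hnat k
  · have : π ^ k = (π ^ (-k).toNat)⁻¹ := by
      rw [← zpow_natCast, ← zpow_neg, Int.toNat_of_nonneg (by omega), neg_neg]
    rw [this, AddValuation.map_inv, hnat,
      ← WithTop.LinearOrderedAddCommGroup.coe_neg]
    norm_cast
    omega

end helpers

theorem stmt2 (p : ℕ) [Fact p.Prime] (L : Type) [Field L] [CharP L p]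
    -- `vL` is the normalized discrete valuation of the CDVF `L`, `π` a uniformizer
    (vL : AddValuation L (WithTop ℤ)) (π : L) (hπ : vL π = 1)
    (a : L) (va : ℤ) (hva : vL a = va) (hneg : va < 0) :
    -- `a` is best, i.e. cannot be modified by an Artin-Schreier term to increase
    -- its valuation, ...
    (¬ ∃ a' b : L, a = a' + (b ^ p - b) ∧ vL a < vL a') ↔
    -- ... iff either `p ∤ v_L(a)`, or `p ∣ v_L(a)` but the residue class of
    -- `a / π^{v_L(a)}` does not lie in `l^p`
      (¬ (p : ℤ) ∣ va) ∨
        ((p : ℤ) ∣ va ∧ ¬ ∃ u : L, 0 ≤ vL u ∧ 0 < vL (a * π ^ (-va) - u ^ p)) := by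
  have hp2 : 2 ≤ p := (Fact.out : p.Prime).two_le
  have hπ0 : π ≠ 0 := by
    intro h
    rw [h, AddValuation.map_zero] at hπ
    exact (by simp : (⊤ : WithTop ℤ) ≠ 1) hπ
  constructor
  · intro H
    by_cases hdvd : (p : ℤ) ∣ va
    · refine Or.inr ⟨hdvd, ?_⟩
      rintro ⟨u, hu0, hupos⟩
      obtain ⟨m, hm⟩ := hdvd
      have hm0 : m < 0 := by nlinarith [hm ▸ hneg]
      set b := u * π ^ m with hb
      have hbp : b ^ p = u ^ p * π ^ va := by
        rw [hb, mul_pow, ← zpow_natCast (π ^ m), ← zpow_mul, mul_comm m (p:ℤ), ← hm]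
      apply H
      refine ⟨a - (b ^ p - b), b, by ring, ?_⟩
      rw [hva]
      have key : a - (b ^ p - b) = (a * π ^ (-va) - u ^ p) * π ^ va + b := by
        have h : a * (π ^ va)⁻¹ * π ^ va = a := by
          field_simp [zpow_ne_zero va hπ0]
        rw [hbp, zpow_neg, sub_mul, h]
        ring
      rw [key]
      have h1 : (va : WithTop ℤ) < vL ((a * π ^ (-va) - u ^ p) * π ^ va) := by
        rw [AddValuation.map_mul, val_zpow vL hπ]
        have := wt_lt_add (d := va) hupos
        simpa using this
      have h2 : (va : WithTop ℤ) < vL b := by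
        rw [hb, AddValuation.map_mul, val_zpow vL hπ]
        have h3 : ((0 + m : ℤ) : WithTop ℤ) ≤ vL u + (m : WithTop ℤ) := wt_le_add hu0
        have h4 : (va : WithTop ℤ) < ((0 + m : ℤ) : WithTop ℤ) := by
          rw [WithTop.coe_lt_coe]; nlinarith
        exact lt_of_lt_of_le h4 h3
      exact AddValuation.map_lt_add vL h1 h2
    · exact Or.inl hdvd
  · rintro hcond ⟨a', b, heq, hlt⟩
    rw [hva] at hlt
    -- v(b^p - b) = v(a - a') = va
    have hsub : vL (b ^ p - b) = (va : WithTop ℤ) := by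
      have : b ^ p - b = a - a' := by rw [heq]; ring
      rw [this, AddValuation.map_sub_eq_of_lt_left vL (hva ▸ hlt), hva]
    -- v b < 0
    have hbneg : vL b < (0 : WithTop ℤ) := by
      by_contra h
      push_neg at h
      have hbp : (0 : WithTop ℤ) ≤ vL (b ^ p) := by
        rw [AddValuation.map_pow]
        exact le_trans h (le_smul_of_one_le_left h (by exact_mod_cast hp2.trans' (by norm_num)))
      have := vL.map_sub (b ^ p) b
      rw [hsub] at this
      have : (0 : WithTop ℤ) ≤ (va : WithTop ℤ) := le_trans (le_min hbp h) this
      exact absurd (by exact_mod_cast this) (not_le.mpr hneg)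
    obtain ⟨c, hc⟩ : ∃ c : ℤ, vL b = (c : WithTop ℤ) := by
      have : vL b ≠ ⊤ := ne_top_of_lt hbneg
      exact ⟨(vL b).untop this, (WithTop.coe_untop _ this).symm⟩
    have hc0 : c < 0 := by rw [hc] at hbneg; exact_mod_cast hbneg
    have hvbp : vL (b ^ p) = ((p * c : ℤ) : WithTop ℤ) := by
      rw [AddValuation.map_pow, hc, ← WithTop.coe_nsmul]
      congr 1
    have hpc : (p : ℤ) * c = va := by
      have hlt2 : vL (b ^ p) < vL b := by
        rw [hvbp, hc, WithTop.coe_lt_coe]; nlinarith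
      have := AddValuation.map_sub_eq_of_lt_left vL hlt2
      rw [hsub, hvbp] at this
      exact_mod_cast this.symm
    have hdvd : (p : ℤ) ∣ va := ⟨c, hpc.symm⟩
    rcases hcond with h | ⟨_, hno⟩
    · exact h hdvd
    · apply hno
      refine ⟨b * π ^ (-c), ?_, ?_⟩
      · rw [AddValuation.map_mul, hc, val_zpow vL hπ, ← WithTop.coe_add]
        simp
      · have hup : (b * π ^ (-c)) ^ p = b ^ p * π ^ (-va) := by
          rw [mul_pow, ← zpow_natCast (π ^ (-c)), ← zpow_mul,
            show (-c) * (p:ℤ) = -va by linear_combination -hpc]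
        have key : a * π ^ (-va) - (b * π ^ (-c)) ^ p = (a' - b) * π ^ (-va) := by
          rw [hup, heq]; ring
        rw [key, AddValuation.map_mul, val_zpow vL hπ]
        have hab : (va : WithTop ℤ) < vL (a' - b) := by
          have h1 : (va : WithTop ℤ) < vL b := by
            rw [hc, WithTop.coe_lt_coe]; nlinarith
          exact lt_of_lt_of_le (lt_min hlt h1) (vL.map_sub a' b)
        have := wt_lt_add (d := -va) hab
        simpa using this
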